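/- The Racah algebra ℜ has no zero divisors: if u, v ∈ ℜ are nonzero, then uv ≠ 0. -/

import Mathlib

noncomputable section

/-- Generators of the Racah algebra. -/
inductive RGen : Type
  | A | B | C | D

namespace Racah

variable (F : Type) [Field F]

/-- The free algebra on the generators `A`, `B`, `C`, `D`. -/
abbrev FA := FreeAlgebra F RGen

def fA : FA F := FreeAlgebra.ι F RGen.A
def fB : FA F := FreeAlgebra.ι F RGen.B
def fC : FA F := FreeAlgebra.ι F RGen.C
def fD : FA F := FreeAlgebra.ι F RGen.D

/-- α = [A,D] + AC − BA in the free algebra. -/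
def fAl : FA F := (fA F * fD F - fD F * fA F) + fA F * fC F - fB F * fA F
/-- β = [B,D] + BA − CB in the free algebra. -/
def fBe : FA F := (fB F * fD F - fD F * fB F) + fB F * fA F - fC F * fB F
/-- γ = [C,D] + CB − AC in the free algebra. -/
def fGa : FA F := (fC F * fD F - fD F * fC F) + fC F * fB F - fA F * fC F

/-- The defining relations of the Racah algebra:
`[A,B] = [B,C] = [C,A] = 2D` and each of `α`, `β`, `γ` commutes with each of `A`, `B`, `C`, `D`. -/
inductive Rel : FA F → FA F → Prop
  | AB : Rel (fA F * fB F - fB F * fA F) (2 * fD F)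
  | BC : Rel (fB F * fC F - fC F * fB F) (2 * fD F)
  | CA : Rel (fC F * fA F - fA F * fC F) (2 * fD F)
  | cen (c x : FA F) (hc : c = fAl F ∨ c = fBe F ∨ c = fGa F)
      (hx : x = fA F ∨ x = fB F ∨ x = fC F ∨ x = fD F) :
      Rel (c * x) (x * c)

/-- The Racah algebra ℜ. -/
abbrev R := RingQuot (Rel F)

def A : R F := RingQuot.mkAlgHom F (Rel F) (fA F)
def B : R F := RingQuot.mkAlgHom F (Rel F) (fB F)
def C : R F := RingQuot.mkAlgHom F (Rel F) (fC F)
def D : R F := RingQuot.mkAlgHom F (Rel F) (fD F)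

/-- α = [A,D] + AC − BA. -/
def al : R F := (A F * D F - D F * A F) + A F * C F - B F * A F
/-- β = [B,D] + BA − CB. -/
def be : R F := (B F * D F - D F * B F) + B F * A F - C F * B F
/-- γ = [C,D] + CB − AC. -/
def ga : R F := (C F * D F - D F * C F) + C F * B F - A F * C F
/-- δ = A + B + C. -/
def de : R F := A F + B F + C F

end Racah


namespace RacahProof
noncomputable section

open Finsupp

variable (F : Type) [Field F]

abbrev P := MvPolynomial (Fin 3) F
abbrev Mon : Type := ℕ × ℕ × ℕ
abbrev V := Mon →₀ P F

def wt (m : Mon) : ℕ := 2 * m.1 + 3 * m.2.1 + 2 * m.2.2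

def Xd : P F := MvPolynomial.X 0
def Xa : P F := MvPolynomial.X 1
def Xb : P F := MvPolynomial.X 2

def e (m : Mon) : V F := Finsupp.single m 1

def LA : V F →ₗ[P F] V F := Finsupp.lmapDomain (P F) (P F) (fun m => (m.1 + 1, m.2))

lemma LA_e (m : Mon) : LA F (e F m) = e F (m.1 + 1, m.2) := Finsupp.mapDomain_single

/-- support weight bound -/
def sb (v : V F) (W : ℕ) : Prop := ∀ m ∈ v.support, wt m ≤ W

lemma sb_zero (W : ℕ) : sb F (0 : V F) W := by simp [sb]

lemma sb_mono {v : V F} {W W' : ℕ} (h : W ≤ W') (hv : sb F v W) : sb F v W' :=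
  fun m hm => le_trans (hv m hm) h

lemma sb_add {u v : V F} {W : ℕ} (hu : sb F u W) (hv : sb F v W) : sb F (u + v) W := by
  intro m hm
  rcases Finset.mem_union.1 (Finsupp.support_add hm) with h | h
  exacts [hu m h, hv m h]

lemma sb_neg {v : V F} {W : ℕ} (hv : sb F v W) : sb F (-v) W := by
  intro m hm; exact hv m (by simpa using hm)

lemma sb_sub {u v : V F} {W : ℕ} (hu : sb F u W) (hv : sb F v W) : sb F (u - v) W := by
  rw [sub_eq_add_neg]; exact sb_add F hu (sb_neg F hv)

lemma sb_smul {v : V F} {W : ℕ} (c : P F) (hv : sb F v W) : sb F (c • v) W := by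
  intro m hm; exact hv m (Finsupp.support_smul hm)

lemma sb_single {m : Mon} {c : P F} {W : ℕ} (h : wt m ≤ W) : sb F (Finsupp.single m c) W := by
  intro m' hm'
  have := Finsupp.support_single_subset hm'
  simp at this; subst this; exact h

lemma sb_e {m : Mon} {W : ℕ} (h : wt m ≤ W) : sb F (e F m) W := sb_single F h

lemma sb_LA {v : V F} {W : ℕ} (hv : sb F v W) : sb F (LA F v) (W + 2) := by
  intro m hm
  have : m ∈ v.support.image (fun m : Mon => (m.1 + 1, m.2)) := by
    exact Finsupp.mapDomain_support hm
  rcases Finset.mem_image.1 this with ⟨a, ha, rfl⟩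
  have := hv a ha
  simp [wt] at *; omega

lemma sb_lc {f : Mon → V F} {c : ℕ} (hf : ∀ m, sb F (f m) (wt m + c)) {v : V F} {W : ℕ}
    (hv : sb F v W) : sb F (linearCombination (P F) f v) (W + c) := by
  rw [linearCombination_apply]
  intro m hm
  have := Finsupp.support_sum hm
  rcases Finset.mem_biUnion.1 this with ⟨a, ha, hma⟩
  have hma' : m ∈ (f a).support := Finsupp.support_smul hma
  exact le_trans (hf a m hma') (by have := hv a ha; omega)

def core : ℕ → ℕ → ℕ → ℕ → V F × V F
  | 0, _, _, _ => (0, 0)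
  | _+1, 0, 0, k => (e F (0, 1, k), e F (0, 0, k + 1))
  | n+1, 0, j+1, k =>
      (e F (0, j + 2, k),
        linearCombination (P F) (fun m : Mon => (core n m.1 m.2.1 m.2.2).1) (core n 0 j k).2
        + Xb F • e F (0, j, k) + Xd F • (core n 0 j k).2
        - (2 : P F) • LA F (core n 0 j k).2 + (2 : P F) • e F (0, j + 1, k)
        - linearCombination (P F) (fun m : Mon => (core n m.1 m.2.1 m.2.2).2) (core n 0 j k).2)
  | n+1, i+1, j, k =>
      (LA F (core n i j k).1 - (2 : P F) • LA F (core n i j k).2 + (2 : P F) • (core n i j k).1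
        - Xa F • e F (i, j, k) + Xd F • e F (i + 1, j, k) - e F (i + 2, j, k),
       LA F (core n i j k).2 - (2 : P F) • (core n i j k).1)

lemma supp_core (n : ℕ) : ∀ i j k, sb F ((core F n i j k).1) (wt (i, j, k) + 3)
    ∧ sb F ((core F n i j k).2) (wt (i, j, k) + 2) := by
  induction n with
  | zero => intro i j k; exact ⟨sb_zero F _, sb_zero F _⟩
  | succ n ih =>
    intro i j k
    match i, j, k with
    | 0, 0, k =>
      exact ⟨sb_e F (by simp [wt] <;> omega), sb_e F (by simp [wt] <;> omega)⟩
    | 0, j+1, k =>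
      constructor
      · exact sb_e F (by simp [wt] <;> omega)
      · have hb := (ih 0 j k).2
        have h1 : sb F (linearCombination (P F) (fun m : Mon => (core F n m.1 m.2.1 m.2.2).1)
            (core F n 0 j k).2) (wt (0, j, k) + 2 + 3) :=
          sb_lc F (fun m => by simpa using (ih m.1 m.2.1 m.2.2).1) hb
        have h2 : sb F (linearCombination (P F) (fun m : Mon => (core F n m.1 m.2.1 m.2.2).2)
            (core F n 0 j k).2) (wt (0, j, k) + 2 + 2) :=
          sb_lc F (fun m => by simpa using (ih m.1 m.2.1 m.2.2).2) hb
        have hw : wt (0, j + 1, k) + 2 = wt (0, j, k) + 5 := by simp [wt] <;> omega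
        show sb F (_ + _ + _ - _ + _ - _) _
        rw [hw]
        apply sb_sub F
        apply sb_add F
        apply sb_sub F
        apply sb_add F
        apply sb_add F
        · exact sb_mono F (by omega) h1
        · exact sb_smul F _ (sb_e F (by simp [wt] <;> omega))
        · exact sb_smul F _ (sb_mono F (by omega) hb)
        · exact sb_smul F _ (sb_mono F (by omega) (sb_LA F hb))
        · exact sb_smul F _ (sb_e F (by simp [wt] <;> omega))
        · exact sb_mono F (by omega) h2
    | i+1, j, k =>
      have hd := (ih i j k).1
      have hb := (ih i j k).2
      have hw3 : wt (i + 1, j, k) + 3 = wt (i, j, k) + 5 := by simp [wt] <;> omega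
      have hw2 : wt (i + 1, j, k) + 2 = wt (i, j, k) + 4 := by simp [wt] <;> omega
      constructor
      · show sb F (_ - _ + _ - _ + _ - _) _
        rw [hw3]
        apply sb_sub F
        apply sb_add F
        apply sb_sub F
        apply sb_add F
        apply sb_sub F
        · exact sb_mono F (by omega) (sb_LA F hd)
        · exact sb_smul F _ (sb_mono F (by omega) (sb_LA F hb))
        · exact sb_smul F _ (sb_mono F (by omega) hd)
        · exact sb_smul F _ (sb_e F (by simp [wt] <;> omega))
        · exact sb_smul F _ (sb_e F (by simp [wt] <;> omega))
        · exact sb_e F (by simp [wt] <;> omega)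
      · show sb F (_ - _) _
        rw [hw2]
        apply sb_sub F
        · exact sb_mono F (by omega) (sb_LA F hb)
        · exact sb_smul F _ (sb_mono F (by omega) hd)

end
end RacahProof

namespace RacahProof
noncomputable section
set_option maxHeartbeats 1000000
variable (F : Type) [Field F]
open Finsupp

lemma core_zero (i j k : ℕ) : core F 0 i j k = (0, 0) := rfl
lemma core_succ00 (n k : ℕ) : core F (n+1) 0 0 k = (e F (0,1,k), e F (0,0,k+1)) := rfl
lemma core_succ0j (n j k : ℕ) : core F (n+1) 0 (j+1) k =
      (e F (0, j + 2, k),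
        linearCombination (P F) (fun m : Mon => (core F n m.1 m.2.1 m.2.2).1) (core F n 0 j k).2
        + Xb F • e F (0, j, k) + Xd F • (core F n 0 j k).2
        - (2 : P F) • LA F (core F n 0 j k).2 + (2 : P F) • e F (0, j + 1, k)
        - linearCombination (P F) (fun m : Mon => (core F n m.1 m.2.1 m.2.2).2) (core F n 0 j k).2) := rfl
lemma core_succi (n i j k : ℕ) : core F (n+1) (i+1) j k =
      (LA F (core F n i j k).1 - (2 : P F) • LA F (core F n i j k).2 + (2 : P F) • (core F n i j k).1
        - Xa F • e F (i, j, k) + Xd F • e F (i + 1, j, k) - e F (i + 2, j, k),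
       LA F (core F n i j k).2 - (2 : P F) • (core F n i j k).1) := rfl

lemma lc_congr {f g : Mon → V F} {v : V F} (h : ∀ m ∈ v.support, f m = g m) :
    linearCombination (P F) f v = linearCombination (P F) g v := by
  rw [linearCombination_apply, linearCombination_apply]
  exact Finsupp.sum_congr (fun m hm => by rw [h m hm])

lemma stab (n : ℕ) : ∀ i j k, 2 * wt (i, j, k) + 1 ≤ n →
    core F (n + 1) i j k = core F n i j k := by
  induction n using Nat.strong_induction_on with
  | _ n ih =>
    intro i j k h
    rcases n with _ | n
    · exact absurd h (by omega)
    rcases i with _ | i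
    · rcases j with _ | j
      · rw [core_succ00, core_succ00]
      · have hw : wt (0, j + 1, k) = wt (0, j, k) + 3 := by simp [wt]; ring
        have hb : core F (n + 1) 0 j k = core F n 0 j k :=
          ih n (Nat.lt_succ_self n) 0 j k (by omega)
        have hsupp := (supp_core F n 0 j k).2
        have hcg : ∀ m ∈ (core F n 0 j k).2.support,
            core F (n + 1) m.1 m.2.1 m.2.2 = core F n m.1 m.2.1 m.2.2 := by
          intro m hm
          have hwm := hsupp m hm
          obtain ⟨a, b, c⟩ := m
          exact ih n (Nat.lt_succ_self n) a b c (by omega)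
        rw [core_succ0j F (n+1) j k, core_succ0j F n j k, hb,
          lc_congr F (fun m hm => congrArg Prod.fst (hcg m hm)),
          lc_congr F (fun m hm => congrArg Prod.snd (hcg m hm))]
    · have hw : wt (i + 1, j, k) = wt (i, j, k) + 2 := by simp [wt]; ring
      have hp : core F (n + 1) i j k = core F n i j k :=
        ih n (Nat.lt_succ_self n) i j k (by omega)
      rw [core_succi F (n+1) i j k, core_succi F n i j k, hp]

lemma core_eq (n : ℕ) (i j k : ℕ) (h : 2 * wt (i, j, k) + 1 ≤ n) :
    core F n i j k = core F (2 * wt (i, j, k) + 1) i j k := by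
  obtain ⟨d, rfl⟩ : ∃ d, n = (2 * wt (i, j, k) + 1) + d := ⟨n - (2 * wt (i,j,k) + 1), by omega⟩
  induction d with
  | zero => rfl
  | succ d ihd =>
    rw [show 2 * wt (i, j, k) + 1 + (d + 1) = (2 * wt (i, j, k) + 1 + d) + 1 by ring,
      stab F _ i j k (by omega)]
    exact ihd (by omega)

def FD (m : Mon) : V F := (core F (2 * wt m + 1) m.1 m.2.1 m.2.2).1
def FB (m : Mon) : V F := (core F (2 * wt m + 1) m.1 m.2.1 m.2.2).2

lemma core_fst (n : ℕ) (i j k : ℕ) (h : 2 * wt (i, j, k) + 1 ≤ n) :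
    (core F n i j k).1 = FD F (i, j, k) := by
  rw [FD]; rw [core_eq F n i j k h]
lemma core_snd (n : ℕ) (i j k : ℕ) (h : 2 * wt (i, j, k) + 1 ≤ n) :
    (core F n i j k).2 = FB F (i, j, k) := by
  rw [FB]; rw [core_eq F n i j k h]

def LD : V F →ₗ[P F] V F := linearCombination (P F) (FD F)
def LB : V F →ₗ[P F] V F := linearCombination (P F) (FB F)

lemma LD_e (m : Mon) : LD F (e F m) = FD F m := by
  rw [LD, e, linearCombination_single, one_smul]
lemma LB_e (m : Mon) : LB F (e F m) = FB F m := by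
  rw [LB, e, linearCombination_single, one_smul]

lemma sb_FD (m : Mon) : sb F (FD F m) (wt m + 3) := by
  rw [FD]; obtain ⟨i,j,k⟩ := m; exact (supp_core F _ i j k).1
lemma sb_FB (m : Mon) : sb F (FB F m) (wt m + 2) := by
  rw [FB]; obtain ⟨i,j,k⟩ := m; exact (supp_core F _ i j k).2

lemma lc_fst_eq (n : ℕ) {v : V F} {W : ℕ} (hv : sb F v W) (h : 2 * W + 1 ≤ n) :
    linearCombination (P F) (fun m : Mon => (core F n m.1 m.2.1 m.2.2).1) v = LD F v := by
  rw [LD]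
  refine lc_congr F (fun m hm => ?_)
  obtain ⟨a, b, c⟩ := m
  exact core_fst F n a b c (by have := hv _ hm; omega)

lemma lc_snd_eq (n : ℕ) {v : V F} {W : ℕ} (hv : sb F v W) (h : 2 * W + 1 ≤ n) :
    linearCombination (P F) (fun m : Mon => (core F n m.1 m.2.1 m.2.2).2) v = LB F v := by
  rw [LB]
  refine lc_congr F (fun m hm => ?_)
  obtain ⟨a, b, c⟩ := m
  exact core_snd F n a b c (by have := hv _ hm; omega)

lemma E0 (j k : ℕ) : FD F (0, j, k) = e F (0, j + 1, k) := by
  rw [FD]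
  rcases j with _ | j
  · rw [core_succ00]
  · rw [core_succ0j]

lemma E2 (k : ℕ) : FB F (0, 0, k) = e F (0, 0, k + 1) := by
  rw [FB, core_succ00]

lemma E4 (i j k : ℕ) : FB F (i + 1, j, k) =
    LA F (FB F (i, j, k)) - (2 : P F) • FD F (i, j, k) := by
  rw [← core_snd F ((2 * wt (i,j,k) + 4) + 1) (i+1) j k (by simp [wt] <;> omega), core_succi]
  dsimp only
  rw [core_fst F _ i j k (by omega), core_snd F _ i j k (by omega)]

lemma E1 (i j k : ℕ) : FD F (i + 1, j, k) =
    LA F (FD F (i, j, k)) - (2 : P F) • LA F (FB F (i, j, k)) + (2 : P F) • FD F (i, j, k)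
      - Xa F • e F (i, j, k) + Xd F • e F (i + 1, j, k)
      - e F (i + 2, j, k) := by
  rw [← core_fst F ((2 * wt (i,j,k) + 4) + 1) (i+1) j k (by simp [wt] <;> omega), core_succi]
  dsimp only
  rw [core_fst F _ i j k (by omega), core_snd F _ i j k (by omega)]

lemma E3 (j k : ℕ) : FB F (0, j + 1, k) =
    LD F (FB F (0, j, k)) + Xb F • e F (0, j, k) + Xd F • FB F (0, j, k)
      - (2 : P F) • LA F (FB F (0, j, k)) + (2 : P F) • e F (0, j + 1, k)
      - LB F (FB F (0, j, k)) := by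
  rw [← core_snd F ((2 * wt (0,j,k) + 6) + 1) 0 (j+1) k (by simp [wt] <;> omega), core_succ0j]
  dsimp only
  rw [core_snd F _ 0 j k (by omega)]
  rw [lc_fst_eq F _ (sb_FB F (0,j,k)) (by omega), lc_snd_eq F _ (sb_FB F (0,j,k)) (by omega)]

end
end RacahProof

namespace RacahProof
noncomputable section
set_option maxHeartbeats 1000000
variable (F : Type) [Field F]
open Finsupp

lemma opext {f g : V F →ₗ[P F] V F} (h : ∀ m, f (e F m) = g (e F m)) : f = g := by
  refine Finsupp.lhom_ext (fun m c => ?_)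
  have hc : (Finsupp.single m c : V F) = c • e F m := by
    rw [e, Finsupp.smul_single, smul_eq_mul, mul_one]
  rw [hc, map_smul, map_smul, h]

lemma LA_e' (i j k : ℕ) : LA F (e F (i,j,k)) = e F (i+1,j,k) := LA_e F (i,j,k)
lemma LB_e' (i j k : ℕ) : LB F (e F (i,j,k)) = FB F (i,j,k) := LB_e F (i,j,k)
lemma LD_e' (i j k : ℕ) : LD F (e F (i,j,k)) = FD F (i,j,k) := LD_e F (i,j,k)
lemma e_succ2 (i j k : ℕ) : e F (i+1+1,j,k) = e F (i+2,j,k) := rfl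

lemma LBLA (v : V F) : LB F (LA F v) = LA F (LB F v) - (2:P F) • LD F v := by
  have h : LB F ∘ₗ LA F = LA F ∘ₗ LB F - (2:P F) • LD F := by
    apply opext
    intro m; obtain ⟨i, j, k⟩ := m
    simp only [LinearMap.comp_apply, LinearMap.sub_apply, LinearMap.smul_apply]
    rw [LA_e', LB_e', LB_e', LD_e', E4]
  have := LinearMap.congr_fun h v
  simpa only [LinearMap.comp_apply, LinearMap.sub_apply, LinearMap.smul_apply] using this

lemma LDLA (v : V F) : LD F (LA F v) = LA F (LD F v) - Xa F • v + Xd F • LA F v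
    - LA F (LA F v) - (2:P F) • LA F (LB F v) + (2:P F) • LD F v := by
  have h : LD F ∘ₗ LA F = LA F ∘ₗ LD F - Xa F • LinearMap.id + Xd F • LA F
      - LA F ∘ₗ LA F - (2:P F) • (LA F ∘ₗ LB F) + (2:P F) • LD F := by
    apply opext
    intro m; obtain ⟨i, j, k⟩ := m
    simp only [LinearMap.comp_apply, LinearMap.sub_apply, LinearMap.add_apply,
      LinearMap.smul_apply, LinearMap.id_apply]
    simp only [LA_e', LD_e', LB_e', E1, e_succ2]
    module
  have := LinearMap.congr_fun h v
  simpa only [LinearMap.comp_apply, LinearMap.sub_apply, LinearMap.add_apply,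
    LinearMap.smul_apply, LinearMap.id_apply] using this

lemma T (i j k : ℕ) : LB F (FD F (i,j,k)) - LD F (FB F (i,j,k)) =
    Xb F • e F (i,j,k) + Xd F • FB F (i,j,k) - (2:P F) • LA F (FB F (i,j,k))
      + (2:P F) • FD F (i,j,k) - LB F (FB F (i,j,k)) := by
  induction i with
  | zero =>
    rw [E0, LB_e', E3]
    module
  | succ i ih =>
    have ih' : LB F (FD F (i,j,k)) = Xb F • e F (i,j,k) + Xd F • FB F (i,j,k)
        - (2:P F) • LA F (FB F (i,j,k)) + (2:P F) • FD F (i,j,k)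
        - LB F (FB F (i,j,k)) + LD F (FB F (i,j,k)) := by
      rw [← ih]; abel
    rw [E1 F i j k, E4 F i j k]
    simp only [map_sub, map_add, map_smul, LBLA F, LDLA F, LB_e', LD_e', LA_e',
      E4 F (i+1) j k, E1 F i j k, E4 F i j k, ih']
    module

end
end RacahProof

namespace RacahProof
noncomputable section
set_option maxHeartbeats 1000000
variable (F : Type) [Field F]
open Finsupp Racah

lemma Tv (v : V F) : LB F (LD F v) - LD F (LB F v) =
    Xb F • v + Xd F • LB F v - (2:P F) • LA F (LB F v) + (2:P F) • LD F v
      - LB F (LB F v) := by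
  have h : LB F ∘ₗ LD F - LD F ∘ₗ LB F = Xb F • LinearMap.id + Xd F • LB F
      - (2:P F) • (LA F ∘ₗ LB F) + (2:P F) • LD F - LB F ∘ₗ LB F := by
    apply opext
    intro m; obtain ⟨i, j, k⟩ := m
    simp only [LinearMap.comp_apply, LinearMap.sub_apply, LinearMap.add_apply,
      LinearMap.smul_apply, LinearMap.id_apply]
    rw [LB_e', LD_e']
    exact T F i j k
  have := LinearMap.congr_fun h v
  simpa only [LinearMap.comp_apply, LinearMap.sub_apply, LinearMap.add_apply,
    LinearMap.smul_apply, LinearMap.id_apply] using this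

/-- the P-linear operator for C -/
def pC : V F →ₗ[P F] V F := Xd F • LinearMap.id - LA F - LB F

lemma pC_apply (v : V F) : pC F v = Xd F • v - LA F v - LB F v := rfl

abbrev E := Module.End F (V F)

def oA : E F := (LA F).restrictScalars F
def oB : E F := (LB F).restrictScalars F
def oD : E F := (LD F).restrictScalars F
def oC : E F := (pC F).restrictScalars F
def oS (p : P F) : E F := ((p • (LinearMap.id : V F →ₗ[P F] V F)).restrictScalars F)

lemma oS_apply (p : P F) (v : V F) : oS F p v = p • v := rfl

lemma oS_comm (p : P F) (f : V F →ₗ[P F] V F) :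
    oS F p * (f.restrictScalars F) = (f.restrictScalars F) * oS F p := by
  apply LinearMap.ext
  intro v
  simp only [Module.End.mul_apply, LinearMap.restrictScalars_apply, oS_apply]
  rw [map_smul]

def gens : RGen → E F
  | RGen.A => oA F
  | RGen.B => oB F
  | RGen.C => oC F
  | RGen.D => oD F

def phi0 : FA F →ₐ[F] E F := FreeAlgebra.lift F (gens F)

lemma phi0_A : phi0 F (fA F) = oA F := FreeAlgebra.lift_ι_apply _ _
lemma phi0_B : phi0 F (fB F) = oB F := FreeAlgebra.lift_ι_apply _ _
lemma phi0_C : phi0 F (fC F) = oC F := FreeAlgebra.lift_ι_apply _ _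
lemma phi0_D : phi0 F (fD F) = oD F := FreeAlgebra.lift_ι_apply _ _

lemma relAB : oA F * oB F - oB F * oA F = 2 * oD F := by
  apply LinearMap.ext; intro v
  simp only [LinearMap.sub_apply, Module.End.mul_apply, LinearMap.restrictScalars_apply,
    oA, oB, oD, two_mul, LinearMap.add_apply]
  simp only [map_sub, map_smul, LBLA F]
  module

lemma relBC : oB F * oC F - oC F * oB F = 2 * oD F := by
  apply LinearMap.ext; intro v
  simp only [LinearMap.sub_apply, Module.End.mul_apply, LinearMap.restrictScalars_apply,
    oA, oB, oC, oD, two_mul, LinearMap.add_apply, pC_apply]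
  simp only [map_sub, map_smul, LBLA F]
  module

lemma relCA : oC F * oA F - oA F * oC F = 2 * oD F := by
  apply LinearMap.ext; intro v
  simp only [LinearMap.sub_apply, Module.End.mul_apply, LinearMap.restrictScalars_apply,
    oA, oB, oC, oD, two_mul, LinearMap.add_apply, pC_apply]
  simp only [map_sub, map_smul, LBLA F]
  module

lemma lamAl : (oA F * oD F - oD F * oA F) + oA F * oC F - oB F * oA F = oS F (Xa F) := by
  apply LinearMap.ext; intro v
  simp only [LinearMap.sub_apply, LinearMap.add_apply, Module.End.mul_apply,
    LinearMap.restrictScalars_apply, oA, oB, oC, oD, oS_apply, pC_apply]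
  simp only [map_sub, map_smul, LDLA F, LBLA F]
  module

lemma lamBe : (oB F * oD F - oD F * oB F) + oB F * oA F - oC F * oB F = oS F (Xb F) := by
  apply LinearMap.ext; intro v
  simp only [LinearMap.sub_apply, LinearMap.add_apply, Module.End.mul_apply,
    LinearMap.restrictScalars_apply, oA, oB, oC, oD, oS_apply, pC_apply]
  have h := Tv F v
  rw [sub_eq_iff_eq_add] at h
  simp only [map_sub, map_smul, h, LBLA F]
  module

lemma lamGa : (oC F * oD F - oD F * oC F) + oC F * oB F - oA F * oC F
    = oS F (-(Xa F) - Xb F) := by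
  apply LinearMap.ext; intro v
  simp only [LinearMap.sub_apply, LinearMap.add_apply, Module.End.mul_apply,
    LinearMap.restrictScalars_apply, oA, oB, oC, oD, oS_apply, pC_apply]
  have h := Tv F v
  rw [sub_eq_iff_eq_add] at h
  simp only [map_sub, map_smul, h, LDLA F, LBLA F]
  module

lemma phi0_Al : phi0 F (fAl F) = oS F (Xa F) := by
  rw [fAl]
  simp only [map_sub, map_add, map_mul, phi0_A, phi0_B, phi0_C, phi0_D]
  exact lamAl F

lemma phi0_Be : phi0 F (fBe F) = oS F (Xb F) := by
  rw [fBe]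
  simp only [map_sub, map_add, map_mul, phi0_A, phi0_B, phi0_C, phi0_D]
  exact lamBe F

lemma phi0_Ga : phi0 F (fGa F) = oS F (-(Xa F) - Xb F) := by
  rw [fGa]
  simp only [map_sub, map_add, map_mul, phi0_A, phi0_B, phi0_C, phi0_D]
  exact lamGa F

lemma hrel : ∀ ⦃x y : FA F⦄, Rel F x y → phi0 F x = phi0 F y := by
  intro x y h
  cases h with
  | AB =>
    simp only [map_sub, map_mul, phi0_A, phi0_B, phi0_D, map_ofNat]
    exact relAB F
  | BC =>
    simp only [map_sub, map_mul, phi0_B, phi0_C, phi0_D, map_ofNat]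
    exact relBC F
  | CA =>
    simp only [map_sub, map_mul, phi0_C, phi0_A, phi0_D, map_ofNat]
    exact relCA F
  | cen c x hc hx =>
    rw [map_mul, map_mul]
    have hcs : ∃ p : P F, phi0 F c = oS F p := by
      rcases hc with rfl | rfl | rfl
      exacts [⟨_, phi0_Al F⟩, ⟨_, phi0_Be F⟩, ⟨_, phi0_Ga F⟩]
    obtain ⟨p, hp⟩ := hcs
    rw [hp]
    have hxs : ∃ f : V F →ₗ[P F] V F, phi0 F x = f.restrictScalars F := by
      rcases hx with rfl | rfl | rfl | rfl
      · exact ⟨LA F, phi0_A F⟩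
      · exact ⟨LB F, phi0_B F⟩
      · exact ⟨pC F, phi0_C F⟩
      · exact ⟨LD F, phi0_D F⟩
    obtain ⟨f, hf⟩ := hxs
    rw [hf, oS_comm]

def phiHat : R F →ₐ[F] E F := RingQuot.liftAlgHom F ⟨phi0 F, hrel F⟩

lemma phiHat_mk (x : FA F) : phiHat F (RingQuot.mkAlgHom F (Rel F) x) = phi0 F x :=
  RingQuot.liftAlgHom_mkAlgHom_apply _ _ _ _

end
end RacahProof

namespace RacahProof
noncomputable section
set_option maxHeartbeats 1000000
variable (F : Type) [Field F]
open Finsupp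

/-! ### monomial order -/

def key (m : Mon) : ℕ ×ₗ (ℕ ×ₗ (ℕ ×ₗ ℕ)) := toLex (wt m, toLex (m.1, toLex (m.2.1, m.2.2)))

lemma key_lt_iff {m m' : Mon} : key m < key m' ↔ wt m < wt m' ∨ (wt m = wt m' ∧
    (m.1 < m'.1 ∨ (m.1 = m'.1 ∧ (m.2.1 < m'.2.1 ∨ (m.2.1 = m'.2.1 ∧ m.2.2 < m'.2.2))))) := by
  simp [key, Prod.Lex.lt_iff]

lemma key_inj {m m' : Mon} (h : key m = key m') : m = m' := by
  obtain ⟨a,b,c⟩ := m; obtain ⟨a',b',c'⟩ := m'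
  simp only [key, toLex_inj, Prod.mk.injEq] at h
  obtain ⟨-, h1, h2, h3⟩ := h
  simp [h1, h2, h3]

lemma key_lt_add {m p n : Mon} (h : key m < key p) : key (m + n) < key (p + n) := by
  obtain ⟨a,b,c⟩ := m; obtain ⟨a',b',c'⟩ := p; obtain ⟨x,y,z⟩ := n
  simp only [key_lt_iff, wt, Prod.mk_add_mk] at h ⊢
  omega

lemma key_le_add {m p n : Mon} (h : key m ≤ key p) : key (m + n) ≤ key (p + n) := by
  rcases eq_or_lt_of_le h with he | hl
  · rw [key_inj he]
  · exact le_of_lt (key_lt_add hl)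

lemma wt_lt_key {m p : Mon} (h : wt m < wt p) : key m < key p := key_lt_iff.2 (Or.inl h)

lemma key_le_wt {m p : Mon} (h : key m ≤ key p) : wt m ≤ wt p := by
  by_contra hc
  exact absurd (wt_lt_key (by omega : wt p < wt m)) (not_lt.2 h)

lemma wt_add (m n : Mon) : wt (m + n) = wt m + wt n := by
  obtain ⟨a,b,c⟩ := m; obtain ⟨x,y,z⟩ := n
  simp [wt, Prod.mk_add_mk]; ring

/-! ### support helpers -/

lemma mem_supp_add {u v : V F} {m : Mon} (h : m ∈ (u + v).support) :
    m ∈ u.support ∨ m ∈ v.support := Finset.mem_union.1 (Finsupp.support_add h)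

lemma mem_supp_sub {u v : V F} {m : Mon} (h : m ∈ (u - v).support) :
    m ∈ u.support ∨ m ∈ v.support := by
  rw [sub_eq_add_neg] at h
  rcases mem_supp_add F h with h | h
  · exact Or.inl h
  · exact Or.inr (by simpa using h)

lemma mem_supp_smul {v : V F} {c : P F} {m : Mon} (h : m ∈ (c • v).support) :
    m ∈ v.support := Finsupp.support_smul h

lemma mem_supp_LA {v : V F} {m : Mon} (h : m ∈ (LA F v).support) :
    ∃ m' ∈ v.support, m = (m'.1 + 1, m'.2) := by
  have : m ∈ v.support.image (fun m : Mon => (m.1 + 1, m.2)) := Finsupp.mapDomain_support h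
  rcases Finset.mem_image.1 this with ⟨a, ha, rfl⟩
  exact ⟨a, ha, rfl⟩

lemma mem_supp_lc {G : Mon → V F} {v : V F} {m : Mon}
    (h : m ∈ (linearCombination (P F) G v).support) :
    ∃ m' ∈ v.support, m ∈ (G m').support := by
  rw [linearCombination_apply] at h
  rcases Finset.mem_biUnion.1 (Finsupp.support_sum h) with ⟨a, ha, hma⟩
  exact ⟨a, ha, Finsupp.support_smul hma⟩

lemma val_zero_of_high {v : V F} {W : ℕ} (hv : sb F v W) {q : Mon} (hq : W < wt q) :
    v q = 0 := by
  by_contra h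
  exact absurd (hv q (Finsupp.mem_support_iff.2 h)) (by omega)

lemma sb_LB {v : V F} {W : ℕ} (hv : sb F v W) : sb F (LB F v) (W + 2) :=
  sb_lc F (fun m => sb_FB F m) hv

lemma sb_LD {v : V F} {W : ℕ} (hv : sb F v W) : sb F (LD F v) (W + 3) :=
  sb_lc F (fun m => sb_FD F m) hv

lemma e_apply_self (m : Mon) : e F m m = 1 := Finsupp.single_eq_same

lemma e_apply_ne {m m' : Mon} (h : m ≠ m') : e F m m' = 0 := Finsupp.single_eq_of_ne' h

lemma lc_apply_eq_single (G : Mon → V F) (v : V F) (q btop : Mon)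
    (h0 : ∀ m' ∈ v.support, m' ≠ btop → G m' q = 0) :
    (linearCombination (P F) G v) q = v btop * G btop q := by
  rw [linearCombination_apply, Finsupp.sum_apply, Finsupp.sum]
  rw [Finset.sum_eq_single btop]
  · rw [Finsupp.smul_apply, smul_eq_mul]
  · intro m' hm' hne
    rw [Finsupp.smul_apply, smul_eq_mul, h0 m' hm' hne, mul_zero]
  · intro h
    rw [Finsupp.notMem_support_iff.1 h]
    simp

/-! ### leading terms of FB and FD -/

lemma GB (i j k : ℕ) : (FB F (i,j,k)) (i,j,k+1) = 1 ∧
    (∀ m' ∈ (FB F (i,j,k)).support, m' = (i,j,k+1) ∨ wt m' < wt (i,j,k) + 2) := by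
  induction i with
  | zero =>
    induction j with
    | zero =>
      rw [E2]
      refine ⟨e_apply_self F _, fun m' hm' => Or.inl ?_⟩
      have := Finsupp.support_single_subset hm'
      simpa [e] using this
    | succ j ihj =>
      have hw : wt (0, j+1, k) = wt (0,j,k) + 3 := by simp [wt]; ring
      constructor
      · rw [E3]
        have t1 : (LD F (FB F (0,j,k))) (0,j+1,k+1) = 1 := by
          rw [LD, lc_apply_eq_single F (FD F) _ _ (0,j,k+1)
            (fun m' hm' hne => ?_), ihj.1, one_mul, E0, e_apply_self]
          rcases ihj.2 m' hm' with he | hwlt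
          · exact absurd he hne
          · exact val_zero_of_high F (sb_FD F m') (by simp [wt] at hwlt ⊢ <;> omega)
        have t3 : (FB F (0,j,k)) (0,j+1,k+1) = 0 :=
          val_zero_of_high F (sb_FB F _) (by simp [wt] <;> omega)
        have t4 : (LA F (FB F (0,j,k))) (0,j+1,k+1) = 0 :=
          val_zero_of_high F (sb_LA F (sb_FB F _)) (by simp [wt] <;> omega)
        have t6 : (LB F (FB F (0,j,k))) (0,j+1,k+1) = 0 :=
          val_zero_of_high F (sb_LB F (sb_FB F _)) (by simp [wt] <;> omega)
        simp [Finsupp.sub_apply, Finsupp.add_apply, Finsupp.smul_apply,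
          t1, t3, t4, t6, e, Finsupp.single_apply]
      · intro m'' hm''
        rw [E3] at hm''
        rcases mem_supp_sub F hm'' with hm | hm
        · rcases mem_supp_add F hm with hm | hm
          · rcases mem_supp_sub F hm with hm | hm
            · rcases mem_supp_add F hm with hm | hm
              · rcases mem_supp_add F hm with hm | hm
                · -- LD (FB (0,j,k))
                  obtain ⟨m', hm', hmm⟩ := mem_supp_lc F hm
                  rcases ihj.2 m' hm' with rfl | hwlt
                  · rw [E0] at hmm
                    have := Finsupp.support_single_subset hmm
                    simp only [Finset.mem_singleton] at this
                    left; rw [this]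
                  · right
                    have := sb_FD F m' m'' hmm
                    simp [wt] at hwlt this ⊢ <;> omega
                · -- Xb • e (0,j,k)
                  right
                  have := Finsupp.support_single_subset (mem_supp_smul F hm)
                  simp only [Finset.mem_singleton] at this
                  subst this; simp [wt] <;> omega
              · -- Xd • FB
                right
                have := sb_FB F (0,j,k) _ (mem_supp_smul F hm)
                simp [wt] at this ⊢ <;> omega
            · -- 2 • LA FB
              right
              have := sb_LA F (sb_FB F (0,j,k)) _ (mem_supp_smul F hm)
              simp [wt] at this ⊢ <;> omega
          · -- 2 • e (0,j+1,k)
            right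
            have := Finsupp.support_single_subset (mem_supp_smul F hm)
            simp only [Finset.mem_singleton] at this
            subst this; simp [wt] <;> omega
        · -- LB FB
          right
          have := sb_LB F (sb_FB F (0,j,k)) _ hm
          simp [wt] at this ⊢ <;> omega
  | succ i ihi =>
    have hw : wt (i+1, j, k) = wt (i,j,k) + 2 := by simp [wt]; ring
    constructor
    · rw [E4, Finsupp.sub_apply, Finsupp.smul_apply]
      have h1 : (LA F (FB F (i,j,k))) (i+1,j,k+1) = FB F (i,j,k) (i,j,k+1) :=
        Finsupp.mapDomain_apply (fun a b hab => by
          simpa [Prod.ext_iff] using hab) _ (i,j,k+1)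
      rw [h1, ihi.1, val_zero_of_high F (sb_FD F _) (by simp [wt] <;> omega)]
      simp
    · intro m'' hm''
      rw [E4] at hm''
      rcases mem_supp_sub F hm'' with hm | hm
      · obtain ⟨m', hm', rfl⟩ := mem_supp_LA F hm
        rcases ihi.2 m' hm' with rfl | hwlt
        · left; rfl
        · right
          obtain ⟨a,b,c⟩ := m'
          simp [wt] at hwlt ⊢ <;> omega
      · right
        have := sb_FD F (i,j,k) _ (mem_supp_smul F hm)
        simp [wt] at this ⊢ <;> omega

lemma GD (i j k : ℕ) : (FD F (i,j,k)) (i,j+1,k) = 1 ∧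
    (∀ m' ∈ (FD F (i,j,k)).support, m' = (i,j+1,k) ∨ wt m' < wt (i,j,k) + 3) := by
  induction i with
  | zero =>
    rw [E0]
    refine ⟨e_apply_self F _, fun m' hm' => Or.inl ?_⟩
    have := Finsupp.support_single_subset hm'
    simpa [e] using this
  | succ i ihi =>
    have hw : wt (i+1, j, k) = wt (i,j,k) + 2 := by simp [wt]; ring
    constructor
    · rw [E1]
      have h1 : (LA F (FD F (i,j,k))) (i+1,j+1,k) = FD F (i,j,k) (i,j+1,k) :=
        Finsupp.mapDomain_apply (fun a b hab => by
          simpa [Prod.ext_iff] using hab) _ (i,j+1,k)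
      have h2 : (LA F (FB F (i,j,k))) (i+1,j+1,k) = FB F (i,j,k) (i,j+1,k) :=
        Finsupp.mapDomain_apply (fun a b hab => by
          simpa [Prod.ext_iff] using hab) _ (i,j+1,k)
      have z1 : (FB F (i,j,k)) (i,j+1,k) = 0 :=
        val_zero_of_high F (sb_FB F _) (by simp [wt] <;> omega)
      have z2 : (FD F (i,j,k)) (i+1,j+1,k) = 0 :=
        val_zero_of_high F (sb_FD F _) (by simp [wt] <;> omega)
      simp [Finsupp.sub_apply, Finsupp.add_apply, Finsupp.smul_apply,
        h1, h2, ihi.1, z1, z2, e, Finsupp.single_apply]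
    · intro m'' hm''
      rw [E1] at hm''
      rcases mem_supp_sub F hm'' with hm | hm
      · rcases mem_supp_add F hm with hm | hm
        · rcases mem_supp_sub F hm with hm | hm
          · rcases mem_supp_add F hm with hm | hm
            · rcases mem_supp_sub F hm with hm | hm
              · -- LA FD
                obtain ⟨m', hm', rfl⟩ := mem_supp_LA F hm
                rcases ihi.2 m' hm' with rfl | hwlt
                · left; rfl
                · right
                  obtain ⟨a,b,c⟩ := m'
                  simp [wt] at hwlt ⊢ <;> omega
              · -- 2 • LA FB
                right
                have := sb_LA F (sb_FB F (i,j,k)) _ (mem_supp_smul F hm)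
                simp [wt] at this ⊢ <;> omega
            · -- 2 • FD
              right
              have := sb_FD F (i,j,k) _ (mem_supp_smul F hm)
              simp [wt] at this ⊢ <;> omega
          · -- Xa • e m
            right
            have := Finsupp.support_single_subset (mem_supp_smul F hm)
            simp only [Finset.mem_singleton] at this
            subst this; simp [wt] <;> omega
        · -- Xd • e (i+1,j,k)
          right
          have := Finsupp.support_single_subset (mem_supp_smul F hm)
          simp only [Finset.mem_singleton] at this
          subst this; simp [wt] <;> omega
      · -- e (i+2,j,k)
        right
        have := Finsupp.support_single_subset hm
        simp only [Finset.mem_singleton] at this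
        subst this; simp [wt] <;> omega

/-! ### HasLead -/

def HasLead (v : V F) (p : Mon) (c : P F) : Prop :=
  v p = c ∧ ∀ m ∈ v.support, key m ≤ key p

lemma lead_lc {G : Mon → V F} {bump : Mon}
    (hval : ∀ m, G m (m + bump) = 1)
    (hsupp : ∀ m, ∀ m' ∈ (G m).support, m' = m + bump ∨ wt m' < wt m + wt bump)
    {v : V F} {p : Mon} {c : P F} (h : HasLead F v p c) :
    HasLead F (linearCombination (P F) G v) (p + bump) c := by
  constructor
  · rw [lc_apply_eq_single F G v (p + bump) p (fun m' hm' hne => ?_)]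
    · rw [hval, h.1, mul_one]
    · by_contra hz
      have hq : (p + bump) ∈ (G m').support := Finsupp.mem_support_iff.2 hz
      rcases hsupp m' _ hq with he | hwlt
      · exact hne (add_right_cancel he.symm)
      · have h1 : wt m' ≤ wt p := key_le_wt (h.2 m' hm')
        rw [wt_add] at hwlt; omega
  · intro m'' hm''
    obtain ⟨m', hm', hmm⟩ := mem_supp_lc F hm''
    rcases hsupp m' m'' hmm with rfl | hwlt
    · exact key_le_add (h.2 m' hm')
    · have h1 : wt m' ≤ wt p := key_le_wt (h.2 m' hm')
      exact le_of_lt (wt_lt_key (by rw [wt_add]; omega))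

lemma bump_a (m : Mon) : m + ((1,0,0) : Mon) = (m.1 + 1, m.2.1, m.2.2) := by
  obtain ⟨a,b,c⟩ := m; simp [Prod.ext_iff]
lemma bump_d (m : Mon) : m + ((0,1,0) : Mon) = (m.1, m.2.1 + 1, m.2.2) := by
  obtain ⟨a,b,c⟩ := m; simp [Prod.ext_iff]
lemma bump_b (m : Mon) : m + ((0,0,1) : Mon) = (m.1, m.2.1, m.2.2 + 1) := by
  obtain ⟨a,b,c⟩ := m; simp [Prod.ext_iff]

lemma LA_lc : LA F = linearCombination (P F) (fun m => e F (m.1 + 1, m.2)) := by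
  apply opext
  intro m
  rw [LA_e]
  simp only [e]
  rw [linearCombination_single, one_smul]

lemma leadA {v : V F} {p : Mon} {c : P F} (h : HasLead F v p c) :
    HasLead F (LA F v) (p + (1,0,0)) c := by
  rw [LA_lc]
  have := lead_lc F (G := fun m => e F (m.1 + 1, m.2)) (bump := (1,0,0))
    (fun m => by rw [bump_a]; exact e_apply_self F _)
    (fun m m' hm' => by
      have := Finsupp.support_single_subset hm'
      simp only [Finset.mem_singleton] at this
      left; rw [this, bump_a]) h
  exact this

lemma leadD {v : V F} {p : Mon} {c : P F} (h : HasLead F v p c) :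
    HasLead F (LD F v) (p + (0,1,0)) c := by
  rw [LD]
  refine lead_lc F (fun m => ?_) (fun m m' hm' => ?_) h
  · obtain ⟨i,j,k⟩ := m; rw [bump_d]; exact (GD F i j k).1
  · obtain ⟨i,j,k⟩ := m
    rcases (GD F i j k).2 m' hm' with rfl | hwlt
    · left; rw [bump_d]
    · right
      have : wt ((0,1,0) : Mon) = 3 := by simp [wt]
      omega

lemma leadB {v : V F} {p : Mon} {c : P F} (h : HasLead F v p c) :
    HasLead F (LB F v) (p + (0,0,1)) c := by
  rw [LB]
  refine lead_lc F (fun m => ?_) (fun m m' hm' => ?_) h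
  · obtain ⟨i,j,k⟩ := m; rw [bump_b]; exact (GB F i j k).1
  · obtain ⟨i,j,k⟩ := m
    rcases (GB F i j k).2 m' hm' with rfl | hwlt
    · left; rw [bump_b]
    · right
      have : wt ((0,0,1) : Mon) = 2 := by simp [wt]
      omega

lemma leadS (q : P F) {v : V F} {p : Mon} {c : P F} (h : HasLead F v p c) :
    HasLead F (q • v) p (q * c) := by
  constructor
  · rw [Finsupp.smul_apply, smul_eq_mul, h.1]
  · intro m hm
    exact h.2 m (mem_supp_smul F hm)

lemma exists_lead {v : V F} (hv : v ≠ 0) : ∃ p, HasLead F v p (v p) ∧ v p ≠ 0 := by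
  have hne : v.support.Nonempty := Finsupp.support_nonempty_iff.2 hv
  obtain ⟨b, hb, hmax⟩ := Finset.exists_max_image v.support key hne
  exact ⟨b, ⟨rfl, fun m hm => hmax m hm⟩, Finsupp.mem_support_iff.1 hb⟩

end
end RacahProof

namespace RacahProof
noncomputable section
set_option maxHeartbeats 1000000
variable (F : Type) [Field F]
open Finsupp Racah

abbrev Mon6 := Mon × Mon

def wt6 (m : Mon6) : ℕ := wt m.1 + (2 * m.2.1 + 4 * m.2.2.1 + 4 * m.2.2.2)

def M6 (m : Mon6) : R F :=
  A F ^ m.1.1 * (D F ^ m.1.2.1 * (B F ^ m.1.2.2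
    * (de F ^ m.2.1 * (al F ^ m.2.2.1 * be F ^ m.2.2.2))))

/-! ### relations in R -/

lemma rAB : A F * B F - B F * A F = 2 * D F := by
  have h := RingQuot.mkAlgHom_rel F (Rel.AB (F := F))
  rw [map_sub, map_mul, map_mul, map_mul, map_ofNat] at h
  exact h

lemma rBC : B F * C F - C F * B F = 2 * D F := by
  have h := RingQuot.mkAlgHom_rel F (Rel.BC (F := F))
  rw [map_sub, map_mul, map_mul, map_mul, map_ofNat] at h
  exact h

lemma rCA : C F * A F - A F * C F = 2 * D F := by
  have h := RingQuot.mkAlgHom_rel F (Rel.CA (F := F))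
  rw [map_sub, map_mul, map_mul, map_mul, map_ofNat] at h
  exact h

lemma mk_fAl : RingQuot.mkAlgHom F (Rel F) (fAl F) = al F := by
  rw [fAl, al]
  simp only [map_sub, map_add, map_mul]
  rfl

lemma mk_fBe : RingQuot.mkAlgHom F (Rel F) (fBe F) = be F := by
  rw [fBe, be]
  simp only [map_sub, map_add, map_mul]
  rfl

lemma cen_rel (c x : FA F) (hc : c = fAl F ∨ c = fBe F ∨ c = fGa F)
    (hx : x = fA F ∨ x = fB F ∨ x = fC F ∨ x = fD F) :
    RingQuot.mkAlgHom F (Rel F) c * RingQuot.mkAlgHom F (Rel F) x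
      = RingQuot.mkAlgHom F (Rel F) x * RingQuot.mkAlgHom F (Rel F) c := by
  have h := RingQuot.mkAlgHom_rel F (Rel.cen c x hc hx)
  rw [map_mul, map_mul] at h
  exact h

lemma central_of {z : R F} (hA : z * A F = A F * z) (hB : z * B F = B F * z)
    (hC : z * C F = C F * z) (hD : z * D F = D F * z) : ∀ y, z * y = y * z := by
  intro y
  obtain ⟨x, rfl⟩ := RingQuot.mkAlgHom_surjective F (Rel F) y
  induction x using FreeAlgebra.induction with
  | grade0 r =>
    rw [AlgHom.commutes]
    exact (Algebra.commutes r z).symm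
  | grade1 g =>
    cases g
    exacts [hA, hB, hC, hD]
  | mul a b iha ihb =>
    rw [map_mul, ← mul_assoc, iha, mul_assoc, ihb, mul_assoc]
  | add a b iha ihb =>
    rw [map_add, mul_add, add_mul, iha, ihb]

lemma al_central : ∀ y, al F * y = y * al F := by
  apply central_of
  · have := cen_rel F (fAl F) (fA F) (Or.inl rfl) (Or.inl rfl); rwa [mk_fAl] at this
  · have := cen_rel F (fAl F) (fB F) (Or.inl rfl) (Or.inr (Or.inl rfl)); rwa [mk_fAl] at this
  · have := cen_rel F (fAl F) (fC F) (Or.inl rfl) (Or.inr (Or.inr (Or.inl rfl))); rwa [mk_fAl] at this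
  · have := cen_rel F (fAl F) (fD F) (Or.inl rfl) (Or.inr (Or.inr (Or.inr rfl))); rwa [mk_fAl] at this

lemma be_central : ∀ y, be F * y = y * be F := by
  apply central_of
  · have := cen_rel F (fBe F) (fA F) (Or.inr (Or.inl rfl)) (Or.inl rfl); rwa [mk_fBe] at this
  · have := cen_rel F (fBe F) (fB F) (Or.inr (Or.inl rfl)) (Or.inr (Or.inl rfl)); rwa [mk_fBe] at this
  · have := cen_rel F (fBe F) (fC F) (Or.inr (Or.inl rfl)) (Or.inr (Or.inr (Or.inl rfl))); rwa [mk_fBe] at this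
  · have := cen_rel F (fBe F) (fD F) (Or.inr (Or.inl rfl)) (Or.inr (Or.inr (Or.inr rfl))); rwa [mk_fBe] at this

lemma deA : de F * A F = A F * de F := by
  have h1 := rAB F
  have h2 := rCA F
  have h : de F * A F - A F * de F = (C F * A F - A F * C F) - (A F * B F - B F * A F) := by
    rw [de]; noncomm_ring
  rw [h1, h2, sub_self] at h
  exact sub_eq_zero.1 h

lemma deB : de F * B F = B F * de F := by
  have h1 := rAB F
  have h2 := rBC F
  have h : de F * B F - B F * de F = (A F * B F - B F * A F) - (B F * C F - C F * B F) := by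
    rw [de]; noncomm_ring
  rw [h1, h2, sub_self] at h
  exact sub_eq_zero.1 h

lemma deC : de F * C F = C F * de F := by
  have h1 := rBC F
  have h2 := rCA F
  have h : de F * C F - C F * de F = (B F * C F - C F * B F) - (C F * A F - A F * C F) := by
    rw [de]; noncomm_ring
  rw [h1, h2, sub_self] at h
  exact sub_eq_zero.1 h

lemma smul2 (y : R F) : (2 : R F) * y = (2 : F) • y := by
  rw [Algebra.smul_def, map_ofNat]

lemma deD (h2 : (2 : F) ≠ 0) : de F * D F = D F * de F := by
  have e1 : de F * (A F * B F) = (A F * B F) * de F := by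
    rw [← mul_assoc, deA, mul_assoc, deB, ← mul_assoc]
  have e2 : de F * (B F * A F) = (B F * A F) * de F := by
    rw [← mul_assoc, deB, mul_assoc, deA, ← mul_assoc]
  have h0 : de F * (2 * D F) = (2 * D F) * de F := by
    rw [← rAB, mul_sub, sub_mul, e1, e2]
  have h1 : (2 : F) • (de F * D F) = (2 : F) • (D F * de F) := by
    rw [← smul2, ← smul2]
    calc 2 * (de F * D F) = de F * (2 * D F) := by noncomm_ring
      _ = (2 * D F) * de F := h0
      _ = 2 * (D F * de F) := by noncomm_ring
  have := congrArg (fun y => (2 : F)⁻¹ • y) h1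
  simpa [smul_smul, inv_mul_cancel₀ h2] using this

lemma de_central (h2 : (2 : F) ≠ 0) : ∀ y, de F * y = y * de F :=
  central_of F (deA F) (deB F) (deC F) (deD F h2)

lemma DA_eq : D F * A F = A F * D F - al F + A F * C F - B F * A F := by
  rw [al]; abel

lemma BA_eq : B F * A F = A F * B F - 2 * D F := by
  rw [← rAB]; abel

lemma C_eq : C F = de F - A F - B F := by rw [de]; abel

lemma BD_eq : B F * D F = D F * B F + be F + de F * B F - 2 * (A F * B F)
    + 2 * D F - B F * B F := by
  have hba := BA_eq F
  rw [be, de]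
  noncomm_ring
  rw [hba]
  noncomm_ring

/-! ### monomial bump lemmas -/

lemma MA (i j k : ℕ) (r : Mon) :
    A F * M6 F ((i,j,k),r) = M6 F ((i+1,j,k),r) := by
  rw [M6, M6]
  rw [pow_succ', mul_assoc]

lemma MD0 (j k : ℕ) (r : Mon) :
    D F * M6 F ((0,j,k),r) = M6 F ((0,j+1,k),r) := by
  simp only [M6, pow_zero, one_mul]
  rw [pow_succ', mul_assoc]

lemma MB00 (k : ℕ) (r : Mon) :
    B F * M6 F ((0,0,k),r) = M6 F ((0,0,k+1),r) := by
  simp only [M6, pow_zero, one_mul]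
  rw [pow_succ', mul_assoc]

lemma pow_pull (a z : R F) (l : ℕ) : a * (a ^ l * z) = a ^ (l+1) * z := by
  rw [← mul_assoc, ← pow_succ']

lemma zmul {z : R F} (hz : ∀ y, z * y = y * z) (x y : R F) :
    z * (x * y) = x * (z * y) := by
  rw [← mul_assoc, hz x, mul_assoc]

lemma Mde (h2 : (2 : F) ≠ 0) (c : Mon) (l p q : ℕ) :
    de F * M6 F (c,(l,p,q)) = M6 F (c,(l+1,p,q)) := by
  obtain ⟨i,j,k⟩ := c
  simp only [M6]
  rw [zmul F (de_central F h2), zmul F (de_central F h2), zmul F (de_central F h2),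
    pow_pull]

lemma Mal (c : Mon) (l p q : ℕ) :
    al F * M6 F (c,(l,p,q)) = M6 F (c,(l,p+1,q)) := by
  obtain ⟨i,j,k⟩ := c
  simp only [M6]
  rw [zmul F (al_central F), zmul F (al_central F), zmul F (al_central F),
    zmul F (al_central F), pow_pull]

lemma Mbe (c : Mon) (l p q : ℕ) :
    be F * M6 F (c,(l,p,q)) = M6 F (c,(l,p,q+1)) := by
  obtain ⟨i,j,k⟩ := c
  simp only [M6]
  rw [zmul F (be_central F), zmul F (be_central F), zmul F (be_central F),
    zmul F (be_central F), zmul F (be_central F), ← pow_succ']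


/-! ### spanning -/

def SpanW (W : ℕ) : Submodule F (R F) :=
  Submodule.span F {x | ∃ m : Mon6, wt6 m ≤ W ∧ M6 F m = x}

def SpanAll : Submodule F (R F) := Submodule.span F (Set.range (M6 F))

lemma SpanW_le_All (W : ℕ) : SpanW F W ≤ SpanAll F :=
  Submodule.span_mono (fun x ⟨m, _, hm⟩ => ⟨m, hm⟩)

lemma mem_SpanW {m : Mon6} {W : ℕ} (h : wt6 m ≤ W) : M6 F m ∈ SpanW F W :=
  Submodule.subset_span ⟨m, h, rfl⟩

lemma SpanW_mono {W W' : ℕ} (h : W ≤ W') : SpanW F W ≤ SpanW F W' :=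
  Submodule.span_mono (fun x ⟨m, hm, he⟩ => ⟨m, le_trans hm h, he⟩)

lemma Smul_closure {g : R F} {t : ℕ} {W : ℕ}
    (hg : ∀ m : Mon6, wt6 m ≤ W → g * M6 F m ∈ SpanW F (wt6 m + t))
    {x : R F} (hx : x ∈ SpanW F W) : g * x ∈ SpanW F (W + t) := by
  induction hx using Submodule.span_induction with
  | mem x hxm =>
    obtain ⟨m, hm, rfl⟩ := hxm
    exact SpanW_mono F (by omega) (hg m hm)
  | zero => simp
  | add a b _ _ iha ihb => rw [mul_add]; exact add_mem iha ihb
  | smul c a _ ih => rw [mul_smul_comm]; exact Submodule.smul_mem _ _ ih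

lemma wt6A (i j k : ℕ) (r : Mon) : wt6 ((i+1,j,k),r) = wt6 ((i,j,k),r) + 2 := by
  simp [wt6, wt]; ring
lemma wt6D (i j k : ℕ) (r : Mon) : wt6 ((i,j+1,k),r) = wt6 ((i,j,k),r) + 3 := by
  simp [wt6, wt]; ring
lemma wt6B (i j k : ℕ) (r : Mon) : wt6 ((i,j,k+1),r) = wt6 ((i,j,k),r) + 2 := by
  simp [wt6, wt]; ring
lemma wt6de (c : Mon) (l p q : ℕ) : wt6 (c,(l+1,p,q)) = wt6 (c,(l,p,q)) + 2 := by
  simp [wt6]; ring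
lemma wt6al (c : Mon) (l p q : ℕ) : wt6 (c,(l,p+1,q)) = wt6 (c,(l,p,q)) + 4 := by
  simp [wt6]; ring
lemma wt6be (c : Mon) (l p q : ℕ) : wt6 (c,(l,p,q+1)) = wt6 (c,(l,p,q)) + 4 := by
  simp [wt6]; ring

lemma SA_closure {W : ℕ} {x : R F} (hx : x ∈ SpanW F W) : A F * x ∈ SpanW F (W + 2) :=
  Smul_closure F (fun m _ => by
    obtain ⟨⟨i,j,k⟩, r⟩ := m
    rw [MA]
    exact mem_SpanW F (by rw [wt6A])) hx

lemma Sde_closure (h2 : (2 : F) ≠ 0) {W : ℕ} {x : R F} (hx : x ∈ SpanW F W) :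
    de F * x ∈ SpanW F (W + 2) :=
  Smul_closure F (fun m _ => by
    obtain ⟨c, ⟨l,p,q⟩⟩ := m
    rw [Mde F h2]
    exact mem_SpanW F (by rw [wt6de])) hx

lemma Sal_closure {W : ℕ} {x : R F} (hx : x ∈ SpanW F W) : al F * x ∈ SpanW F (W + 4) :=
  Smul_closure F (fun m _ => by
    obtain ⟨c, ⟨l,p,q⟩⟩ := m
    rw [Mal]
    exact mem_SpanW F (by rw [wt6al])) hx

lemma Sbe_closure {W : ℕ} {x : R F} (hx : x ∈ SpanW F W) : be F * x ∈ SpanW F (W + 4) :=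
  Smul_closure F (fun m _ => by
    obtain ⟨c, ⟨l,p,q⟩⟩ := m
    rw [Mbe]
    exact mem_SpanW F (by rw [wt6be])) hx

lemma S2_closure {W : ℕ} {x : R F} (hx : x ∈ SpanW F W) : (2 : R F) * x ∈ SpanW F W := by
  rw [smul2]
  exact Submodule.smul_mem _ _ hx

lemma PDPB (h2 : (2 : F) ≠ 0) (n : ℕ) : ∀ m : Mon6,
    (2 * wt6 m + 6 ≤ n → D F * M6 F m ∈ SpanW F (wt6 m + 3)) ∧
    (2 * wt6 m + 5 ≤ n → B F * M6 F m ∈ SpanW F (wt6 m + 2)) := by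
  induction n using Nat.strong_induction_on with
  | _ n ih =>
    have ihD : ∀ m' : Mon6, 2 * wt6 m' + 6 < n →
        D F * M6 F m' ∈ SpanW F (wt6 m' + 3) :=
      fun m' hm' => (ih _ hm' m').1 le_rfl
    have ihB : ∀ m' : Mon6, 2 * wt6 m' + 5 < n →
        B F * M6 F m' ∈ SpanW F (wt6 m' + 2) :=
      fun m' hm' => (ih _ hm' m').2 le_rfl
    have SD_closure : ∀ W : ℕ, 2 * W + 6 < n → ∀ x ∈ SpanW F W,
        D F * x ∈ SpanW F (W + 3) := by
      intro W hW x hx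
      refine Smul_closure F (fun m' hm' => ?_) hx
      exact ihD m' (by omega)
    have SB_closure : ∀ W : ℕ, 2 * W + 5 < n → ∀ x ∈ SpanW F W,
        B F * x ∈ SpanW F (W + 2) := by
      intro W hW x hx
      refine Smul_closure F (fun m' hm' => ?_) hx
      exact ihB m' (by omega)
    intro m
    obtain ⟨⟨i, j, k⟩, r⟩ := m
    constructor
    · -- D case
      intro hn
      rcases i with _ | i
      · rw [MD0]
        exact mem_SpanW F (by rw [wt6D])
      · set w := wt6 ((i,j,k),r) with hwdef
        have hw : wt6 ((i+1,j,k),r) = w + 2 := wt6A i j k r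
        rw [hw]
        have hMi : M6 F ((i+1,j,k),r) = A F * M6 F ((i,j,k),r) := (MA F i j k r).symm
        rw [hMi, ← mul_assoc, DA_eq]
        have expand : (A F * D F - al F + A F * C F - B F * A F) * M6 F ((i,j,k),r)
            = A F * (D F * M6 F ((i,j,k),r)) - al F * M6 F ((i,j,k),r)
              + A F * (C F * M6 F ((i,j,k),r)) - B F * (A F * M6 F ((i,j,k),r)) := by
          simp only [sub_mul, add_mul, mul_assoc]
        rw [expand]
        have hDm : D F * M6 F ((i,j,k),r) ∈ SpanW F (w + 3) := ihD _ (by omega)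
        have hBm : B F * M6 F ((i,j,k),r) ∈ SpanW F (w + 2) := ihB _ (by omega)
        have hBm1 : B F * (A F * M6 F ((i,j,k),r)) ∈ SpanW F (w + 4) := by
          rw [MA]
          have := ihB ((i+1,j,k),r) (by omega)
          rwa [hw] at this
        have hCm : C F * M6 F ((i,j,k),r) ∈ SpanW F (w + 2) := by
          rw [C_eq, sub_mul, sub_mul]
          refine sub_mem (sub_mem ?_ ?_) hBm
          · have := Sde_closure F h2 (mem_SpanW F (le_refl w))
            exact this
          · have := SA_closure F (mem_SpanW F (le_refl w))
            exact this
        have halm : al F * M6 F ((i,j,k),r) ∈ SpanW F (w + 4) :=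
          Sal_closure F (mem_SpanW F (le_refl w))
        refine sub_mem (add_mem (sub_mem ?_ ?_) ?_) ?_
        · exact SpanW_mono F (by omega) (SA_closure F hDm)
        · exact SpanW_mono F (by omega) halm
        · exact SpanW_mono F (by omega) (SA_closure F hCm)
        · exact SpanW_mono F (by omega) hBm1
    · -- B case
      intro hn
      rcases i with _ | i
      · rcases j with _ | j
        · rw [MB00]
          exact mem_SpanW F (by rw [wt6B])
        · set w := wt6 ((0,j,k),r) with hwdef
          have hw : wt6 ((0,j+1,k),r) = w + 3 := wt6D 0 j k r
          rw [hw]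
          have hM : M6 F ((0,j+1,k),r) = D F * M6 F ((0,j,k),r) := (MD0 F j k r).symm
          rw [hM, ← mul_assoc, BD_eq]
          have hBm : B F * M6 F ((0,j,k),r) ∈ SpanW F (w + 2) := ihB _ (by omega)
          have hDm : D F * M6 F ((0,j,k),r) ∈ SpanW F (w + 3) := ihD _ (by omega)
          have expand : (D F * B F + be F + de F * B F - 2 * (A F * B F) + 2 * D F
              - B F * B F) * M6 F ((0,j,k),r)
              = D F * (B F * M6 F ((0,j,k),r)) + be F * M6 F ((0,j,k),r)
                + de F * (B F * M6 F ((0,j,k),r))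
                - 2 * (A F * (B F * M6 F ((0,j,k),r)))
                + 2 * (D F * M6 F ((0,j,k),r))
                - B F * (B F * M6 F ((0,j,k),r)) := by
            simp only [sub_mul, add_mul, mul_assoc]
          rw [expand]
          refine sub_mem (add_mem (sub_mem (add_mem (add_mem ?_ ?_) ?_) ?_) ?_) ?_
          · -- D * (B * M)
            exact SpanW_mono F (by omega) (SD_closure (w+2) (by omega) _ hBm)
          · -- be * M
            exact SpanW_mono F (by omega) (Sbe_closure F (mem_SpanW F (le_refl w)))
          · -- de * (B * M)
            exact SpanW_mono F (by omega) (Sde_closure F h2 hBm)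
          · -- 2 * (A * (B * M))
            exact SpanW_mono F (by omega) (S2_closure F (SA_closure F hBm))
          · -- 2 * (D * M)
            exact SpanW_mono F (by omega) (S2_closure F hDm)
          · -- B * (B * M)
            exact SpanW_mono F (by omega) (SB_closure (w+2) (by omega) _ hBm)
      · set w := wt6 ((i,j,k),r) with hwdef
        have hw : wt6 ((i+1,j,k),r) = w + 2 := wt6A i j k r
        rw [hw]
        have hMi : M6 F ((i+1,j,k),r) = A F * M6 F ((i,j,k),r) := (MA F i j k r).symm
        rw [hMi, ← mul_assoc, BA_eq]
        have expand : (A F * B F - 2 * D F) * M6 F ((i,j,k),r)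
            = A F * (B F * M6 F ((i,j,k),r)) - 2 * (D F * M6 F ((i,j,k),r)) := by
          simp only [sub_mul, add_mul, mul_assoc]
        rw [expand]
        have hBm : B F * M6 F ((i,j,k),r) ∈ SpanW F (w + 2) := ihB _ (by omega)
        have hDm : D F * M6 F ((i,j,k),r) ∈ SpanW F (w + 3) := ihD _ (by omega)
        refine sub_mem ?_ ?_
        · exact SA_closure F hBm
        · exact SpanW_mono F (by omega) (S2_closure F hDm)

lemma PD (h2 : (2 : F) ≠ 0) (m : Mon6) : D F * M6 F m ∈ SpanW F (wt6 m + 3) :=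
  (PDPB F h2 (2 * wt6 m + 6) m).1 le_rfl

lemma PB (h2 : (2 : F) ≠ 0) (m : Mon6) : B F * M6 F m ∈ SpanW F (wt6 m + 2) :=
  (PDPB F h2 (2 * wt6 m + 5) m).2 le_rfl

lemma gen_closure_all (h2 : (2 : F) ≠ 0) {g : R F}
    (hg : ∀ m : Mon6, g * M6 F m ∈ SpanAll F) {x : R F} (hx : x ∈ SpanAll F) :
    g * x ∈ SpanAll F := by
  induction hx using Submodule.span_induction with
  | mem x hxm =>
    obtain ⟨m, rfl⟩ := hxm
    exact hg m
  | zero => simp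
  | add a b _ _ iha ihb => rw [mul_add]; exact add_mem iha ihb
  | smul c a _ ih => rw [mul_smul_comm]; exact Submodule.smul_mem _ _ ih

lemma span_top (h2 : (2 : F) ≠ 0) : ∀ u : R F, u ∈ SpanAll F := by
  have hA : ∀ x ∈ SpanAll F, A F * x ∈ SpanAll F := by
    intro x hx
    refine gen_closure_all F h2 (fun m => ?_) hx
    obtain ⟨⟨i,j,k⟩, r⟩ := m
    rw [MA]
    exact Submodule.subset_span ⟨_, rfl⟩
  have hB : ∀ x ∈ SpanAll F, B F * x ∈ SpanAll F := by
    intro x hx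
    refine gen_closure_all F h2 (fun m => ?_) hx
    exact SpanW_le_All F _ (PB F h2 m)
  have hD : ∀ x ∈ SpanAll F, D F * x ∈ SpanAll F := by
    intro x hx
    refine gen_closure_all F h2 (fun m => ?_) hx
    exact SpanW_le_All F _ (PD F h2 m)
  have hC : ∀ x ∈ SpanAll F, C F * x ∈ SpanAll F := by
    intro x hx
    refine gen_closure_all F h2 (fun m => ?_) hx
    rw [C_eq, sub_mul, sub_mul]
    refine sub_mem (sub_mem ?_ ?_) ?_
    · obtain ⟨c, ⟨l,p,q⟩⟩ := m
      rw [Mde F h2]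
      exact Submodule.subset_span ⟨_, rfl⟩
    · obtain ⟨⟨i,j,k⟩, r⟩ := m
      rw [MA]
      exact Submodule.subset_span ⟨_, rfl⟩
    · exact SpanW_le_All F _ (PB F h2 m)
  have h1 : (1 : R F) ∈ SpanAll F := by
    have : M6 F ((0,0,0),(0,0,0)) = 1 := by simp [M6]
    rw [← this]
    exact Submodule.subset_span ⟨_, rfl⟩
  have main : ∀ x : FA F, ∀ s ∈ SpanAll F,
      RingQuot.mkAlgHom F (Rel F) x * s ∈ SpanAll F := by
    intro x
    induction x using FreeAlgebra.induction with
    | grade0 r =>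
      intro s hs
      rw [AlgHom.commutes, ← Algebra.smul_def]
      exact Submodule.smul_mem _ _ hs
    | grade1 g =>
      cases g
      exacts [hA, hB, hC, hD]
    | mul a b iha ihb =>
      intro s hs
      rw [map_mul, mul_assoc]
      exact iha _ (ihb s hs)
    | add a b iha ihb =>
      intro s hs
      rw [map_add, add_mul]
      exact add_mem (iha s hs) (ihb s hs)
  intro u
  obtain ⟨x, rfl⟩ := RingQuot.mkAlgHom_surjective F (Rel F) u
  have := main x 1 h1
  rwa [mul_one] at this

end
end RacahProof

namespace RacahProof
noncomputable section
set_option maxHeartbeats 1000000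
variable (F : Type) [Field F]
open Finsupp Racah

lemma phiHat_A : phiHat F (Racah.A F) = oA F := (phiHat_mk F (fA F)).trans (phi0_A F)
lemma phiHat_B : phiHat F (Racah.B F) = oB F := (phiHat_mk F (fB F)).trans (phi0_B F)
lemma phiHat_C : phiHat F (Racah.C F) = oC F := (phiHat_mk F (fC F)).trans (phi0_C F)
lemma phiHat_D : phiHat F (Racah.D F) = oD F := (phiHat_mk F (fD F)).trans (phi0_D F)

lemma oABC : oA F + oB F + oC F = oS F (Xd F) := by
  apply LinearMap.ext; intro v
  simp only [LinearMap.add_apply, oA, oB, oC, oS_apply, pC_apply,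
    LinearMap.restrictScalars_apply]
  abel

lemma phiHat_de : phiHat F (de F) = oS F (Xd F) := by
  rw [de, map_add, map_add, phiHat_A, phiHat_B, phiHat_C]; exact oABC F

lemma phiHat_al : phiHat F (al F) = oS F (Xa F) := by
  rw [al]
  simp only [map_sub, map_add, map_mul, phiHat_A, phiHat_B, phiHat_C, phiHat_D]
  exact lamAl F

lemma phiHat_be : phiHat F (be F) = oS F (Xb F) := by
  rw [be]
  simp only [map_sub, map_add, map_mul, phiHat_A, phiHat_B, phiHat_C, phiHat_D]
  exact lamBe F

def psiL : R F →ₗ[F] V F :=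
  (LinearMap.applyₗ (e F (0,0,0))).comp (phiHat F).toLinearMap

lemma psiL_apply (x : R F) : psiL F x = phiHat F x (e F (0,0,0)) := rfl

lemma oS_mul (p q : P F) : oS F p * oS F q = oS F (p * q) := by
  apply LinearMap.ext; intro v
  simp only [Module.End.mul_apply, oS_apply, smul_smul]

lemma oS_pow (p : P F) (n : ℕ) : (oS F p) ^ n = oS F (p ^ n) := by
  induction n with
  | zero =>
    apply LinearMap.ext; intro v
    simp [oS_apply]
  | succ n ihn =>
    rw [pow_succ, ihn, oS_mul, ← pow_succ]

lemma oA_app (v : V F) : oA F v = LA F v := rfl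
lemma oB_app (v : V F) : oB F v = LB F v := rfl
lemma oD_app (v : V F) : oD F v = LD F v := rfl

lemma oBpow (k c : ℕ) (s : P F) :
    (oB F ^ k) (s • e F (0,0,c)) = s • e F (0,0,c+k) := by
  induction k with
  | zero => simp
  | succ k ihk =>
    rw [pow_succ', Module.End.mul_apply, ihk, oB_app, map_smul, LB_e', E2]
    all_goals simp [add_assoc]

lemma oDpow (j t k : ℕ) (s : P F) :
    (oD F ^ j) (s • e F (0,t,k)) = s • e F (0,t+j,k) := by
  induction j with
  | zero => simp
  | succ j ihj =>
    rw [pow_succ', Module.End.mul_apply, ihj, oD_app, map_smul, LD_e', E0]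
    all_goals simp [add_assoc]

lemma oApow (i a b c : ℕ) (s : P F) :
    (oA F ^ i) (s • e F (a,b,c)) = s • e F (a+i,b,c) := by
  induction i with
  | zero => simp
  | succ i ihi =>
    rw [pow_succ', Module.End.mul_apply, ihi, oA_app, map_smul, LA_e']
    all_goals simp [add_assoc]

lemma psi_M6 (i j k l p q : ℕ) :
    psiL F (M6 F ((i,j,k),(l,p,q)))
      = (Xd F ^ l * (Xa F ^ p * Xb F ^ q)) • e F (i,j,k) := by
  rw [psiL_apply, M6]
  simp only [map_mul, map_pow, phiHat_A, phiHat_B, phiHat_D, phiHat_de, phiHat_al,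
    phiHat_be]
  simp only [Module.End.mul_apply, oS_pow]
  rw [oS_apply, oS_apply, oS_apply, smul_smul, smul_smul, oBpow, oDpow, oApow]
  simp [mul_assoc]

/-! ### leads through words -/

lemma leadApow (i : ℕ) {v : V F} {p : Mon} {c : P F} (h : HasLead F v p c) :
    HasLead F ((oA F ^ i) v) (p + (i,0,0)) c := by
  induction i with
  | zero =>
    have hp0 : p + ((0:ℕ),(0:ℕ),(0:ℕ)) = p := by
      obtain ⟨a,b,c0⟩ := p; simp only [Prod.mk_add_mk, Prod.mk.injEq, and_true, true_and]; try omega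
    rw [pow_zero, Module.End.one_apply, hp0]
    exact h
  | succ i ihi =>
    have h2 := leadA F ihi
    have hp : (p + (i,0,0)) + ((1:ℕ),(0:ℕ),(0:ℕ)) = p + (i+1,0,0) := by
      obtain ⟨a,b,c0⟩ := p; simp only [Prod.mk_add_mk, Prod.mk.injEq, and_true, true_and]; try omega
    rw [pow_succ', Module.End.mul_apply, oA_app, ← hp]
    exact h2

lemma leadDpow (j : ℕ) {v : V F} {p : Mon} {c : P F} (h : HasLead F v p c) :
    HasLead F ((oD F ^ j) v) (p + (0,j,0)) c := by
  induction j with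
  | zero =>
    have hp0 : p + ((0:ℕ),(0:ℕ),(0:ℕ)) = p := by
      obtain ⟨a,b,c0⟩ := p; simp only [Prod.mk_add_mk, Prod.mk.injEq, and_true, true_and]; try omega
    rw [pow_zero, Module.End.one_apply, hp0]
    exact h
  | succ j ihj =>
    have h2 := leadD F ihj
    have hp : (p + (0,j,0)) + ((0:ℕ),(1:ℕ),(0:ℕ)) = p + (0,j+1,0) := by
      obtain ⟨a,b,c0⟩ := p; simp only [Prod.mk_add_mk, Prod.mk.injEq, and_true, true_and]; try omega
    rw [pow_succ', Module.End.mul_apply, oD_app, ← hp]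
    exact h2

lemma leadBpow (k : ℕ) {v : V F} {p : Mon} {c : P F} (h : HasLead F v p c) :
    HasLead F ((oB F ^ k) v) (p + (0,0,k)) c := by
  induction k with
  | zero =>
    have hp0 : p + ((0:ℕ),(0:ℕ),(0:ℕ)) = p := by
      obtain ⟨a,b,c0⟩ := p; simp only [Prod.mk_add_mk, Prod.mk.injEq, and_true, true_and]; try omega
    rw [pow_zero, Module.End.one_apply, hp0]
    exact h
  | succ k ihk =>
    have h2 := leadB F ihk
    have hp : (p + (0,0,k)) + ((0:ℕ),(0:ℕ),(1:ℕ)) = p + (0,0,k+1) := by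
      obtain ⟨a,b,c0⟩ := p; simp only [Prod.mk_add_mk, Prod.mk.injEq, and_true, true_and]; try omega
    rw [pow_succ', Module.End.mul_apply, oB_app, ← hp]
    exact h2

lemma lead_word (i j k l p q : ℕ) {w : V F} {p3 : Mon} {cc : P F}
    (h : HasLead F w p3 cc) :
    HasLead F (phiHat F (M6 F ((i,j,k),(l,p,q))) w)
      ((i,j,k) + p3) ((Xd F ^ l * (Xa F ^ p * Xb F ^ q)) * cc) := by
  have hexp : phiHat F (M6 F ((i,j,k),(l,p,q))) w
      = (oA F ^ i) ((oD F ^ j) ((oB F ^ k) ((oS F (Xd F ^ l))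
          ((oS F (Xa F ^ p)) ((oS F (Xb F ^ q)) w))))) := by
    rw [M6]
    simp only [map_mul, map_pow, phiHat_A, phiHat_B, phiHat_D, phiHat_de, phiHat_al,
      phiHat_be, oS_pow, Module.End.mul_apply]
  rw [hexp]
  have h1 : HasLead F ((oS F (Xb F ^ q)) w) p3 (Xb F ^ q * cc) := leadS F _ h
  have h2 : HasLead F ((oS F (Xa F ^ p)) ((oS F (Xb F ^ q)) w)) p3
      (Xa F ^ p * (Xb F ^ q * cc)) := leadS F _ h1
  have h3 : HasLead F ((oS F (Xd F ^ l)) ((oS F (Xa F ^ p)) ((oS F (Xb F ^ q)) w))) p3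
      (Xd F ^ l * (Xa F ^ p * (Xb F ^ q * cc))) := leadS F _ h2
  have h4 := leadApow F i (leadDpow F j (leadBpow F k h3))
  have hpt : ((p3 + (0,0,k)) + (0,j,0)) + (i,0,0) = (i,j,k) + p3 := by
    obtain ⟨a,b,c0⟩ := p3; simp only [Prod.mk_add_mk, Prod.mk.injEq, and_true, true_and]; try omega
  have hcf : (Xd F ^ l * (Xa F ^ p * Xb F ^ q)) * cc
      = Xd F ^ l * (Xa F ^ p * (Xb F ^ q * cc)) := by ring
  rw [← hpt, hcf]
  exact h4

/-! ### independence -/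

def vec3 (r : Mon) : Fin 3 →₀ ℕ :=
  Finsupp.single 0 r.1 + Finsupp.single 1 r.2.1 + Finsupp.single 2 r.2.2

lemma mono_eq (l p q : ℕ) :
    Xd F ^ l * (Xa F ^ p * Xb F ^ q)
      = MvPolynomial.monomial (vec3 (l,p,q)) 1 := by
  rw [Xd, Xa, Xb, MvPolynomial.X_pow_eq_monomial, MvPolynomial.X_pow_eq_monomial,
    MvPolynomial.X_pow_eq_monomial, MvPolynomial.monomial_mul, MvPolynomial.monomial_mul,
    vec3]
  rw [one_mul, add_assoc]
  norm_num

lemma vec3_inj {r r' : Mon} (h : vec3 r = vec3 r') : r = r' := by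
  obtain ⟨a,b,c⟩ := r; obtain ⟨a',b',c'⟩ := r'
  have h0 := DFunLike.congr_fun h 0
  have h1 := DFunLike.congr_fun h 1
  have h2 := DFunLike.congr_fun h 2
  simp [vec3, Finsupp.single_apply] at h0 h1 h2
  simp [Prod.ext_iff, h0, h1, h2]

lemma psi_sum {c : Mon6 →₀ F} {w : R F} (hc : (c.sum fun m a => a • M6 F m) = w) :
    psiL F w = ∑ m ∈ c.support,
      c m • ((MvPolynomial.monomial (vec3 m.2) 1 : P F) • e F m.1) := by
  rw [← hc, Finsupp.sum, map_sum]
  refine Finset.sum_congr rfl (fun m _ => ?_)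
  rw [map_smul]
  obtain ⟨⟨i,j,k⟩,⟨l,p,q⟩⟩ := m
  rw [psi_M6, mono_eq]

lemma psi_ne (h2 : (2 : F) ≠ 0) {w : R F} (hw : w ≠ 0) : psiL F w ≠ 0 := by
  obtain ⟨c, hc⟩ := Finsupp.mem_span_range_iff_exists_finsupp.1 (span_top F h2 w)
  have hcne : c ≠ 0 := by
    rintro rfl
    rw [Finsupp.sum_zero_index] at hc
    exact hw hc.symm
  obtain ⟨m0, hm0⟩ := Finsupp.support_nonempty_iff.2 hcne
  intro h0
  have hval := psi_sum F hc
  rw [h0] at hval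
  have hv1 := congrArg (fun z : V F => MvPolynomial.coeff (vec3 m0.2) (z m0.1)) hval.symm
  simp only [Finsupp.coe_zero, Pi.zero_apply, MvPolynomial.coeff_zero] at hv1
  rw [Finset.sum_apply', MvPolynomial.coeff_sum] at hv1
  have h0s : ∀ m ∈ c.support, m ≠ m0 → MvPolynomial.coeff (vec3 m0.2)
      ((c m • ((MvPolynomial.monomial (vec3 m.2) 1 : P F) • e F m.1)) m0.1) = 0 := by
    intro m hm hne
    rw [Finsupp.smul_apply, Finsupp.smul_apply, smul_eq_mul]
    by_cases h1 : m.1 = m0.1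
    · rw [h1, e_apply_self, mul_one, MvPolynomial.coeff_smul, MvPolynomial.coeff_monomial,
        if_neg (fun hv => hne (Prod.ext h1 (vec3_inj hv))), smul_zero]
    · rw [e_apply_ne F h1, mul_zero, MvPolynomial.coeff_smul, MvPolynomial.coeff_zero,
        smul_zero]
  have h1s : m0 ∉ c.support → MvPolynomial.coeff (vec3 m0.2)
      ((c m0 • ((MvPolynomial.monomial (vec3 m0.2) 1 : P F) • e F m0.1)) m0.1) = 0 :=
    fun habs => absurd hm0 habs
  rw [Finset.sum_eq_single m0 h0s h1s] at hv1
  rw [Finsupp.smul_apply, Finsupp.smul_apply, smul_eq_mul, e_apply_self, mul_one,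
    MvPolynomial.coeff_smul, MvPolynomial.coeff_monomial, if_pos rfl] at hv1
  exact (Finsupp.mem_support_iff.1 hm0) (by simpa using hv1)

end
end RacahProof


open RacahProof in
open Racah in
/-- ℜ has no zero divisors: if u, v ∈ ℜ are nonzero then uv ≠ 0. -/
theorem stmt16 (F : Type) [Field F] (h2 : (2 : F) ≠ 0) :
    ∀ u v : Racah.R F, u ≠ 0 → v ≠ 0 → u * v ≠ 0 := by
  intro u v hu hv huv
  classical
  have hpv : psiL F v ≠ 0 := psi_ne F h2 hv
  obtain ⟨p3, hlead, hcc⟩ := exists_lead F hpv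
  obtain ⟨cu, hcu⟩ := Finsupp.mem_span_range_iff_exists_finsupp.1 (span_top F h2 u)
  have hcune : cu ≠ 0 := by
    rintro rfl
    rw [Finsupp.sum_zero_index] at hcu
    exact hu hcu.symm
  have hsne : (cu.support.image Prod.fst).Nonempty :=
    (Finsupp.support_nonempty_iff.2 hcune).image _
  obtain ⟨b, hb, hmaxb⟩ := Finset.exists_max_image _ key hsne
  obtain ⟨mstar, hmstar, hmstar1⟩ := Finset.mem_image.1 hb
  have hmulv : psiL F (u * v) = phiHat F u (psiL F v) := by
    rw [psiL_apply, map_mul, Module.End.mul_apply, ← psiL_apply]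
  have hexpand : phiHat F u (psiL F v)
      = ∑ m ∈ cu.support, cu m • (phiHat F (M6 F m) (psiL F v)) := by
    have h1 : phiHat F u = ∑ m ∈ cu.support, cu m • phiHat F (M6 F m) := by
      conv_lhs => rw [← hcu]
      rw [Finsupp.sum, map_sum]
      exact Finset.sum_congr rfl (fun m _ => by rw [map_smul])
    rw [h1, LinearMap.sum_apply]
    exact Finset.sum_congr rfl (fun m _ => by rw [LinearMap.smul_apply])
  have hval : ∀ m ∈ cu.support,
      (phiHat F (M6 F m) (psiL F v)) (b + p3)
        = if m.1 = b
            then (MvPolynomial.monomial (vec3 m.2) 1 : P F) * (psiL F v) p3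
            else 0 := by
    intro m hm
    have hmem : m.1 ∈ cu.support.image Prod.fst := Finset.mem_image_of_mem _ hm
    obtain ⟨⟨i,j,k⟩, ⟨l,p,q⟩⟩ := m
    have hw := lead_word F i j k l p q hlead
    rw [mono_eq] at hw
    by_cases hb1 : ((i,j,k) : Mon) = b
    · rw [if_pos hb1, ← hb1]
      exact hw.1
    · rw [if_neg hb1]
      have hk1 : key (i,j,k) ≤ key b := hmaxb _ hmem
      have hk2 : key (i,j,k) ≠ key b := fun hk => hb1 (key_inj hk)
      have hklt : key ((i,j,k) + p3) < key (b + p3) :=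
        key_lt_add (lt_of_le_of_ne hk1 hk2)
      by_contra hz
      have hq3mem := Finsupp.mem_support_iff.2 hz
      have h4 := hw.2 _ hq3mem
      exact absurd (lt_of_le_of_lt h4 hklt) (lt_irrefl _)
  have htot : (psiL F (u * v)) (b + p3)
      = (∑ m ∈ cu.support.filter (fun m => m.1 = b),
          cu m • (MvPolynomial.monomial (vec3 m.2) 1 : P F)) * (psiL F v) p3 := by
    rw [hmulv, hexpand, Finset.sum_apply']
    have hsummand : ∀ m ∈ cu.support,
        (cu m • (phiHat F (M6 F m) (psiL F v))) (b + p3)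
          = if m.1 = b
              then cu m • ((MvPolynomial.monomial (vec3 m.2) 1 : P F) * (psiL F v) p3)
              else 0 := by
      intro m hm
      rw [Finsupp.smul_apply, hval m hm]
      split_ifs with hsp
      · rfl
      · rw [smul_zero]
    rw [Finset.sum_congr rfl hsummand, ← Finset.sum_filter, Finset.sum_mul]
    exact Finset.sum_congr rfl (fun m _ => (smul_mul_assoc _ _ _).symm)
  have hpolyne : (∑ m ∈ cu.support.filter (fun m => m.1 = b),
      cu m • (MvPolynomial.monomial (vec3 m.2) 1 : P F)) ≠ 0 := by
    intro h0
    have hco := congrArg (MvPolynomial.coeff (vec3 mstar.2)) h0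
    rw [MvPolynomial.coeff_sum, MvPolynomial.coeff_zero] at hco
    have hA : ∀ m ∈ cu.support.filter (fun m => m.1 = b), m ≠ mstar →
        MvPolynomial.coeff (vec3 mstar.2)
          (cu m • (MvPolynomial.monomial (vec3 m.2) 1 : P F)) = 0 := by
      intro m hmf hne
      obtain ⟨hms, hmb⟩ := Finset.mem_filter.1 hmf
      rw [MvPolynomial.coeff_smul, MvPolynomial.coeff_monomial,
        if_neg (fun hvv => hne (Prod.ext (hmb.trans hmstar1.symm) (vec3_inj hvv))),
        smul_zero]
    have hB : mstar ∉ cu.support.filter (fun m => m.1 = b) →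
        MvPolynomial.coeff (vec3 mstar.2)
          (cu mstar • (MvPolynomial.monomial (vec3 mstar.2) 1 : P F)) = 0 :=
      fun habs => absurd (Finset.mem_filter.2 ⟨hmstar, hmstar1⟩) habs
    rw [Finset.sum_eq_single mstar hA hB, MvPolynomial.coeff_smul,
      MvPolynomial.coeff_monomial, if_pos rfl] at hco
    exact (Finsupp.mem_support_iff.1 hmstar) (by simpa using hco)
  have hfin : (psiL F (u * v)) (b + p3) ≠ 0 := by
    rw [htot]
    exact mul_ne_zero hpolyne hcc
  apply hfin
  rw [huv, map_zero]
  rfl
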